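/- For the three-channel system with A = [[1,0,0],[0,1,0],[0,1,1]], B_1 = (1,0,0)ᵀ, B_2 = (0,1,0)ᵀ, B_3 = (1,0,0)ᵀ, C_1 = [[1,0,0],[0,0,1]], C_2 = C_3 = [0,1,0], and augmented output matrices C̄_1 = [C_1; C_2], C̄_2 = [C_2; C_3], C̄_3 = [C_3; C_1] (obtained from output-sharing along a directed 3-cycle), the matrix [I_3 − A, B_1, B_3; C̄_2, 0, 0] has rank 2 < 3; hence λ = 1 is a fixed eigenvalue of the augmented system {A, B_i, C̄_i; 3}, even though the original system is jointly controllable and jointly observable. -/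

import Mathlib

open Matrix Complex

lemma rank_ge_of_submatrix {F : Type*} [Field F] {m n : Type*} [Fintype m] [Fintype n]
    [DecidableEq m] [DecidableEq n] {k : ℕ} (A : Matrix m n F) (f : Fin k → m) (g : Fin k → n)
    (h : IsUnit (A.submatrix f g).det) : k ≤ A.rank := by
  have h1 : A.submatrix f g =
      ((1 : Matrix m m F).submatrix f id) * (A * ((1 : Matrix n n F).submatrix id g)) := by
    ext i j
    simp [Matrix.mul_apply, Matrix.one_apply, Matrix.vecHead, Matrix.vecTail, Matrix.cons_val_two, Fin.ext_iff]
  calc k = (A.submatrix f g).rank := by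
        rw [Matrix.rank_of_isUnit _ ((Matrix.isUnit_iff_isUnit_det _).mpr h), Fintype.card_fin]
    _ ≤ (A * ((1 : Matrix n n F).submatrix id g)).rank := by
        rw [h1]; exact Matrix.rank_mul_le_right _ _
    _ ≤ A.rank := Matrix.rank_mul_le_left _ _


/-- For the concrete three-channel example with output sharing along a directed
3-cycle: the pencil `[I₃ − A, B₁, B₃; C̄₂, 0, 0]` (with `C̄₂ = [C₂; C₃]`) has
rank `2 < 3`, so `λ = 1` is a fixed eigenvalue of the augmented system, even
though the original system is jointly controllable and jointly observable
(verified by the Hautus tests over `ℂ`). -/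
theorem stmt19 :
    let A : Matrix (Fin 3) (Fin 3) ℝ := !![1, 0, 0; 0, 1, 0; 0, 1, 1]
    let B1 : Matrix (Fin 3) (Fin 1) ℝ := !![1; 0; 0]
    let B2 : Matrix (Fin 3) (Fin 1) ℝ := !![0; 1; 0]
    let B3 : Matrix (Fin 3) (Fin 1) ℝ := !![1; 0; 0]
    let C1 : Matrix (Fin 2) (Fin 3) ℝ := !![1, 0, 0; 0, 0, 1]
    let C2 : Matrix (Fin 1) (Fin 3) ℝ := !![0, 1, 0]
    let C3 : Matrix (Fin 1) (Fin 3) ℝ := !![0, 1, 0]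
    -- the fixed-mode pencil at λ = 1 for the subset s = {1, 3}
    (fromBlocks ((1 : Matrix (Fin 3) (Fin 3) ℝ) - A) (fromCols B1 B3)
        (fromRows C2 C3) (0 : Matrix (Fin 1 ⊕ Fin 1) (Fin 1 ⊕ Fin 1) ℝ)).rank = 2 ∧
      (2 : ℕ) < 3 ∧
      -- joint controllability of the original system
      (∀ s : ℂ,
        (fromCols (s • (1 : Matrix (Fin 3) (Fin 3) ℂ) - A.map ofReal)
          (fromCols (B1.map ofReal)
            (fromCols (B2.map ofReal) (B3.map ofReal)))).rank = 3) ∧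
      -- joint observability of the original system
      (∀ s : ℂ,
        (fromRows (s • (1 : Matrix (Fin 3) (Fin 3) ℂ) - A.map ofReal)
          (fromRows (C1.map ofReal)
            (fromRows (C2.map ofReal) (C3.map ofReal)))).rank = 3) := by
  intro A B1 B2 B3 C1 C2 C3
  refine ⟨?_, by norm_num, ?_, ?_⟩
  · -- rank of pencil = 2
    apply le_antisymm
    · -- upper bound: factor through rank ≤ 2
      set M := fromBlocks ((1 : Matrix (Fin 3) (Fin 3) ℝ) - A) (fromCols B1 B3)
        (fromRows C2 C3) (0 : Matrix (Fin 1 ⊕ Fin 1) (Fin 1 ⊕ Fin 1) ℝ) with hM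
      have hfac : M = (fromRows (!![1,0;0,0;0,-1] : Matrix (Fin 3) (Fin 2) ℝ)
            (fromRows (!![0,1] : Matrix (Fin 1) (Fin 2) ℝ) !![0,1])) *
          (fromCols (!![0,0,0;0,1,0] : Matrix (Fin 2) (Fin 3) ℝ)
            (fromCols (!![1;0] : Matrix (Fin 2) (Fin 1) ℝ) !![1;0])) := by
        ext i j
        rcases i with i | (i | i) <;> rcases j with j | (j | j) <;>
          fin_cases i <;> fin_cases j <;>
          norm_num [hM, A, B1, B3, C2, C3, Matrix.mul_apply, Fin.sum_univ_two,
            Matrix.one_apply, Matrix.vecHead, Matrix.vecTail, Matrix.cons_val_two, Fin.ext_iff, Matrix.sub_apply,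
            Matrix.fromBlocks, Matrix.fromRows_apply_inl, Matrix.fromRows_apply_inr, Matrix.fromCols_apply_inl, Matrix.fromCols_apply_inr]
      calc M.rank ≤ (fromRows (!![1,0;0,0;0,-1] : Matrix (Fin 3) (Fin 2) ℝ)
            (fromRows (!![0,1] : Matrix (Fin 1) (Fin 2) ℝ) !![0,1])).rank := by
            rw [hfac]; exact Matrix.rank_mul_le_left _ _
        _ ≤ 2 := (Matrix.rank_le_card_width _).trans_eq (Fintype.card_fin 2)
    · -- lower bound via an invertible 2×2 submatrix
      apply rank_ge_of_submatrix _ (![Sum.inl 0, Sum.inl 2])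
        (![Sum.inr (Sum.inl 0), Sum.inl 1])
      rw [Matrix.det_fin_two]
      norm_num [Matrix.det_fin_two, Matrix.fromBlocks, Matrix.fromCols_apply_inl, Matrix.fromCols_apply_inr, Matrix.sub_apply,
        Matrix.one_apply, Matrix.vecHead, Matrix.vecTail, Matrix.cons_val_two, Fin.ext_iff, A, B1, B3, isUnit_iff_ne_zero]
  · -- controllability
    intro s
    apply le_antisymm
    · exact (Matrix.rank_le_card_height _).trans_eq (Fintype.card_fin 3)
    · by_cases hs : s = 1
      · subst hs
        apply rank_ge_of_submatrix _ id
          (![Sum.inr (Sum.inl 0), Sum.inr (Sum.inr (Sum.inl 0)), Sum.inl 1])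
        norm_num [Matrix.det_fin_three, Matrix.fromCols_apply_inl, Matrix.fromCols_apply_inr, Matrix.one_apply, Matrix.vecHead, Matrix.vecTail, Matrix.cons_val_two, Fin.ext_iff,
          Matrix.smul_apply, Matrix.sub_apply, Matrix.map_apply, A, B1, B2, B3,
          isUnit_iff_ne_zero]
      · apply rank_ge_of_submatrix _ id (![Sum.inl 0, Sum.inl 1, Sum.inl 2])
        have h1 : s - 1 ≠ 0 := sub_ne_zero.mpr hs
        simp only [Matrix.det_fin_three, Matrix.submatrix_apply, Matrix.fromCols_apply_inl, Matrix.fromCols_apply_inr,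
          Matrix.one_apply, Matrix.vecHead, Matrix.vecTail, Matrix.cons_val_two, Fin.ext_iff, Matrix.smul_apply, Matrix.sub_apply, Matrix.map_apply, A,
          isUnit_iff_ne_zero]
        norm_num [Matrix.cons_val_two, Matrix.vecHead, Matrix.vecTail, Matrix.one_apply, Fin.ext_iff]
        field_simp
        exact h1
  · -- observability
    intro s
    apply le_antisymm
    · exact (Matrix.rank_le_card_width _).trans_eq (Fintype.card_fin 3)
    · apply rank_ge_of_submatrix _
        (![Sum.inr (Sum.inl 0), Sum.inr (Sum.inr (Sum.inl 0)), Sum.inr (Sum.inl 1)]) id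
      rw [Matrix.det_fin_three]
      norm_num [Matrix.det_fin_three, Matrix.cons_val_two, Matrix.vecHead, Matrix.vecTail, Matrix.fromRows_apply_inl, Matrix.fromRows_apply_inr, Matrix.map_apply,
        C1, C2, C3, isUnit_iff_ne_zero]
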